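/- Let v₁, v₂, v₃ ∈ ℝ² be affinely independent points, let Δ = conv{v₁, v₂, v₃}, and define the Hutchinson operator H(A) = f₁(A) ∪ f₂(A) ∪ f₃(A), where fᵢ(x) = (x + vᵢ)/2. Define the Sierpinski triangle T = ⋂_{n≥0} Hⁿ(Δ). Then each edge of Δ is contained in T; in particular, the closed segment [v₂, v₃] is a subset of T. -/

import Mathlib

/-- A segment is covered by the two half-scalings toward its endpoints. -/
lemma seg_sub_halves {E : Type*} [AddCommGroup E] [Module ℝ E] (a b : E) :
    segment ℝ a b ⊆ ((fun x => (2:ℝ)⁻¹ • (x + a)) '' segment ℝ a b) ∪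
      ((fun x => (2:ℝ)⁻¹ • (x + b)) '' segment ℝ a b) := by
  intro z hz
  rw [segment_eq_image] at hz
  obtain ⟨t, ⟨ht0, ht1⟩, rfl⟩ := hz
  rcases le_or_gt t 2⁻¹ with h | h
  · left
    refine ⟨(1 - 2*t) • a + (2*t) • b, ?_, ?_⟩
    · rw [segment_eq_image]; exact ⟨2*t, ⟨by linarith, by linarith⟩, by ring_nf⟩
    · module
  · right
    refine ⟨(1 - (2*t-1)) • a + (2*t-1) • b, ?_, ?_⟩
    · rw [segment_eq_image]; exact ⟨2*t-1, ⟨by linarith, by linarith⟩, by ring_nf⟩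
    · module

/-- Each edge of the triangle `Δ = conv{v₁, v₂, v₃}` is contained in the
Sierpinski triangle `T = ⋂ₙ Hⁿ(Δ)`, where `H` is the Hutchinson operator of the
three half-way contractions toward the vertices; in particular `[v₂, v₃] ⊆ T`. -/
theorem sierpinski_contains_edges (v₁ v₂ v₃ : EuclideanSpace ℝ (Fin 2))
    (hindep : AffineIndependent ℝ ![v₁, v₂, v₃])
    (Δ : Set (EuclideanSpace ℝ (Fin 2))) (hΔ : Δ = convexHull ℝ {v₁, v₂, v₃})
    (H : Set (EuclideanSpace ℝ (Fin 2)) → Set (EuclideanSpace ℝ (Fin 2)))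
    (hH : H = fun A =>
      ((fun x => (2 : ℝ)⁻¹ • (x + v₁)) '' A) ∪
      ((fun x => (2 : ℝ)⁻¹ • (x + v₂)) '' A) ∪
      ((fun x => (2 : ℝ)⁻¹ • (x + v₃)) '' A))
    (T : Set (EuclideanSpace ℝ (Fin 2))) (hT : T = ⋂ n : ℕ, H^[n] Δ) :
    segment ℝ v₁ v₂ ⊆ T ∧ segment ℝ v₁ v₃ ⊆ T ∧ segment ℝ v₂ v₃ ⊆ T := by
  have mono : ∀ A B, A ⊆ B → H A ⊆ H B := by
    subst hH
    intro A B hAB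
    exact Set.union_subset_union (Set.union_subset_union
      (Set.image_mono hAB) (Set.image_mono hAB)) (Set.image_mono hAB)
  have key : ∀ a b : EuclideanSpace ℝ (Fin 2),
      segment ℝ a b ⊆ Δ →
      (((fun x => (2:ℝ)⁻¹ • (x + a)) '' segment ℝ a b ∪
        (fun x => (2:ℝ)⁻¹ • (x + b)) '' segment ℝ a b) ⊆ H (segment ℝ a b)) →
      segment ℝ a b ⊆ T := by
    intro a b hseg hsub
    rw [hT]
    apply Set.subset_iInter
    intro n
    induction n with
    | zero => simpa using hseg
    | succ n ih =>
      rw [Function.iterate_succ_apply']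
      exact (seg_sub_halves a b).trans (hsub.trans (mono _ _ ih))
  have h1 : v₁ ∈ ({v₁, v₂, v₃} : Set (EuclideanSpace ℝ (Fin 2))) := by simp
  have h2 : v₂ ∈ ({v₁, v₂, v₃} : Set (EuclideanSpace ℝ (Fin 2))) := by simp
  have h3 : v₃ ∈ ({v₁, v₂, v₃} : Set (EuclideanSpace ℝ (Fin 2))) := by simp
  have hconv := convex_convexHull ℝ ({v₁, v₂, v₃} : Set (EuclideanSpace ℝ (Fin 2)))
  have hmem : ∀ x ∈ ({v₁, v₂, v₃} : Set (EuclideanSpace ℝ (Fin 2))),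
      x ∈ convexHull ℝ ({v₁, v₂, v₃} : Set (EuclideanSpace ℝ (Fin 2))) :=
    fun x hx => subset_convexHull ℝ _ hx
  refine ⟨?_, ?_, ?_⟩
  · refine key v₁ v₂ ?_ ?_
    · rw [hΔ]; exact hconv.segment_subset (hmem _ h1) (hmem _ h2)
    · rw [hH]
      exact Set.union_subset
        (Set.subset_union_left.trans Set.subset_union_left)
        (Set.subset_union_right.trans Set.subset_union_left)
  · refine key v₁ v₃ ?_ ?_
    · rw [hΔ]; exact hconv.segment_subset (hmem _ h1) (hmem _ h3)
    · rw [hH]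
      exact Set.union_subset
        (Set.subset_union_left.trans Set.subset_union_left)
        Set.subset_union_right
  · refine key v₂ v₃ ?_ ?_
    · rw [hΔ]; exact hconv.segment_subset (hmem _ h2) (hmem _ h3)
    · rw [hH]
      exact Set.union_subset
        (Set.subset_union_right.trans Set.subset_union_left)
        Set.subset_union_right
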